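/- Let m ≥ 2 be an integer and ε > 0, and define η(s) = log(s) · (log^{[m]}(s))^{1+ε} for s large enough that log^{[m]}(s) > 0. Then for every integer k ≥ 1 there exist constants C_k > 0 and s_k ≥ 1 such that |η^{(k)}(s)| ≤ C_k s^{−k} η(s) for all s ≥ s_k. -/

import Mathlib

noncomputable section

open Real Set Filter MeasureTheory

/-- Japanese bracket `⟨ξ⟩ = (1 + |ξ|²)^(1/2)`. -/
def jb {n : ℕ} (ξ : EuclideanSpace ℝ (Fin n)) : ℝ := Real.sqrt (1 + ‖ξ‖ ^ 2)

/-- Partial derivative in the `i`-th coordinate direction. -/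
def pd {n : ℕ} (i : Fin n) (f : EuclideanSpace ℝ (Fin n) → ℝ) :
    EuclideanSpace ℝ (Fin n) → ℝ :=
  fun x => fderiv ℝ f x (EuclideanSpace.single i 1)

/-- Iterated partial derivative `∂^α` for a multi-index `α : Fin n → ℕ`. -/
def md {n : ℕ} (α : Fin n → ℕ) (f : EuclideanSpace ℝ (Fin n) → ℝ) :
    EuclideanSpace ℝ (Fin n) → ℝ :=
  (List.finRange n).foldr (fun i g => (pd i)^[α i] g) f

/-- Iterated logarithm: log^[1] = log, log^[m] = log ∘ log^[m-1]. -/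
def iterLog : ℕ → ℝ → ℝ
  | 0, s => s
  | m + 1, s => iterLog m (Real.log s)

lemma iterLog_succ' (m : ℕ) : ∀ s, iterLog (m+1) s = Real.log (iterLog m s) := by
  induction m with
  | zero => intro s; rfl
  | succ m ih => intro s; show iterLog (m+1) (Real.log s) = _; rw [ih (Real.log s)]; rfl

lemma tendsto_iterLog (j : ℕ) : Tendsto (iterLog j) atTop atTop := by
  induction j with
  | zero => exact tendsto_id
  | succ j ih =>
    have : iterLog (j+1) = iterLog j ∘ Real.log := rfl
    rw [this]
    exact ih.comp Real.tendsto_log_atTop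

lemma ev_ge (j : ℕ) (c : ℝ) : ∀ᶠ s in atTop, c ≤ iterLog j s :=
  (tendsto_iterLog j).eventually_ge_atTop c

def dL (j : ℕ) (s : ℝ) : ℝ := (∏ i ∈ Finset.range j, iterLog i s)⁻¹

lemma iterLog_contDiffAt (j : ℕ) (s : ℝ) (h : ∀ i < j, 0 < iterLog i s) :
    ContDiffAt ℝ (⊤:ℕ∞) (iterLog j) s := by
  induction j with
  | zero => exact contDiffAt_id
  | succ j ih =>
    have hc : iterLog (j+1) = Real.log ∘ iterLog j := funext (iterLog_succ' j)
    rw [hc]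
    exact (Real.contDiffAt_log.mpr (h j (Nat.lt_succ_self j)).ne').comp s
      (ih (fun i hi => h i (hi.trans (Nat.lt_succ_self j))))

lemma iterLog_hasDerivAt (j : ℕ) (s : ℝ) (h : ∀ i < j, 0 < iterLog i s) :
    HasDerivAt (iterLog j) (dL j s) s := by
  induction j with
  | zero =>
    have h0 : HasDerivAt (iterLog 0) 1 s := hasDerivAt_id s
    simpa [dL] using h0
  | succ j ih =>
    have hc : iterLog (j+1) = Real.log ∘ iterLog j := funext (iterLog_succ' j)
    rw [hc]
    have h1 : HasDerivAt Real.log (iterLog j s)⁻¹ (iterLog j s) :=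
      Real.hasDerivAt_log (h j (Nat.lt_succ_self j)).ne'
    have := h1.comp s (ih (fun i hi => h i (hi.trans (Nat.lt_succ_self j))))
    simpa [dL, Finset.prod_range_succ, mul_inv, mul_comm] using this

variable {f g : ℝ → ℝ} {a x : ℝ} {n : ℕ}

lemma itD_eq_within (n : ℕ) (f : ℝ → ℝ) {a x : ℝ} (hx : x ∈ Ioi a) :
    iteratedDeriv n f x = iteratedDerivWithin n f (Ioi a) x := by
  rw [iteratedDeriv_eq_iteratedFDeriv, iteratedDerivWithin_eq_iteratedFDerivWithin,
    iteratedFDerivWithin_of_isOpen n isOpen_Ioi hx]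

lemma abs_itD_eq (n : ℕ) (f : ℝ → ℝ) (x : ℝ) :
    ‖iteratedFDeriv ℝ n f x‖ = |iteratedDeriv n f x| := by
  rw [norm_iteratedFDeriv_eq_norm_iteratedDeriv, Real.norm_eq_abs]

/-- Leibniz inequality -/
lemma itD_mul_le (hf : ContDiffOn ℝ (⊤:ℕ∞) f (Ioi a)) (hg : ContDiffOn ℝ (⊤:ℕ∞) g (Ioi a))
    (hx : x ∈ Ioi a) (n : ℕ) :
    |iteratedDeriv n (fun y => f y * g y) x| ≤
      ∑ i ∈ Finset.range (n + 1), (n.choose i : ℝ) *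
        |iteratedDeriv i f x| * |iteratedDeriv (n - i) g x| := by
  have h := norm_iteratedFDerivWithin_mul_le (𝕜 := ℝ) hf hg (uniqueDiffOn_Ioi a) hx
    (n := n) (by exact_mod_cast le_top)
  calc |iteratedDeriv n (fun y => f y * g y) x|
      = ‖iteratedFDerivWithin ℝ n (fun y => f y * g y) (Ioi a) x‖ := by
        rw [← abs_itD_eq]
        exact congrArg norm (iteratedFDerivWithin_of_isOpen n isOpen_Ioi hx).symm
    _ ≤ _ := h.trans (le_of_eq (Finset.sum_congr rfl (fun i _ => by
        rw [iteratedFDerivWithin_of_isOpen i isOpen_Ioi hx,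
          iteratedFDerivWithin_of_isOpen _ isOpen_Ioi hx, abs_itD_eq, abs_itD_eq])))

/-- Leibniz equality -/
lemma itD_mul (n : ℕ) (hf : ContDiffOn ℝ (⊤:ℕ∞) f (Ioi a)) (hg : ContDiffOn ℝ (⊤:ℕ∞) g (Ioi a))
    (hx : x ∈ Ioi a) :
    iteratedDeriv n (fun y => f y * g y) x =
      ∑ i ∈ Finset.range (n + 1), (n.choose i : ℝ) *
        iteratedDeriv i f x * iteratedDeriv (n - i) g x := by
  induction n generalizing f g x with
  | zero => simp
  | succ n ih =>
    have hdf : ContDiffOn ℝ (⊤:ℕ∞) (deriv f) (Ioi a) := by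
      exact hf.deriv_of_isOpen isOpen_Ioi (le_of_eq rfl)
    have hdg : ContDiffOn ℝ (⊤:ℕ∞) (deriv g) (Ioi a) := by
      exact hg.deriv_of_isOpen isOpen_Ioi (le_of_eq rfl)
    have hev : deriv (fun y => f y * g y) =ᶠ[nhds x]
        (fun y => deriv f y * g y + f y * deriv g y) := by
      filter_upwards [isOpen_Ioi.mem_nhds hx] with y hy
      exact deriv_fun_mul ((hf.contDiffAt (isOpen_Ioi.mem_nhds hy)).differentiableAt (by simp))
        ((hg.contDiffAt (isOpen_Ioi.mem_nhds hy)).differentiableAt (by simp))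
    rw [iteratedDeriv_succ', hev.iteratedDeriv_eq n]
    have hadd : iteratedDeriv n (fun y => deriv f y * g y + f y * deriv g y) x =
        iteratedDeriv n (fun y => deriv f y * g y) x
          + iteratedDeriv n (fun y => f y * deriv g y) x := by
      rw [itD_eq_within n _ hx, itD_eq_within n _ hx, itD_eq_within n _ hx]
      exact iteratedDerivWithin_add hx (uniqueDiffOn_Ioi a)
        (((hdf.mul hg).of_le (by exact_mod_cast le_top)).contDiffWithinAt hx)
        (((hf.mul hdg).of_le (by exact_mod_cast le_top)).contDiffWithinAt hx)
    rw [hadd, ih hdf hg hx, ih hf hdg hx]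
    simp only [← iteratedDeriv_succ']
    -- Pascal recombination
    have key : ∀ (A B : ℕ → ℝ),
        (∑ i ∈ Finset.range (n+1), (n.choose i : ℝ) * A (i+1) * B (n - i))
          + (∑ i ∈ Finset.range (n+1), (n.choose i : ℝ) * A i * B (n - i + 1))
        = ∑ i ∈ Finset.range (n+2), ((n+1).choose i : ℝ) * A i * B (n + 1 - i) := by
      intro A B
      have h1 : ∑ i ∈ Finset.range (n+1), (n.choose i:ℝ) * A (i+1) * B (n-i)
          = (∑ i ∈ Finset.range n, (n.choose i:ℝ) * A (i+1) * B (n-i))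
            + A (n+1) * B 0 := by
        rw [Finset.sum_range_succ]; simp
      have h2 : ∑ i ∈ Finset.range (n+1), (n.choose i:ℝ) * A i * B (n-i+1)
          = (∑ i ∈ Finset.range n, (n.choose (i+1):ℝ) * A (i+1) * B (n-i))
            + A 0 * B (n+1) := by
        rw [Finset.sum_range_succ']
        congr 1
        · refine Finset.sum_congr rfl (fun i hi => ?_)
          have hin : i < n := Finset.mem_range.mp hi
          have : n - (i+1) + 1 = n - i := by omega
          rw [this]
        · simp
      have h3 : ∑ i ∈ Finset.range (n+2), ((n+1).choose i:ℝ) * A i * B (n+1-i)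
          = ((∑ i ∈ Finset.range n, ((n+1).choose (i+1):ℝ) * A (i+1) * B (n-i))
              + A (n+1) * B 0) + A 0 * B (n+1) := by
        rw [Finset.sum_range_succ']
        congr 1
        · rw [Finset.sum_range_succ]
          congr 1
          · refine Finset.sum_congr rfl (fun i hi => ?_)
            have : n + 1 - (i+1) = n - i := by omega
            rw [this]
          · simp
        · simp
      rw [h1, h2, h3]
      have : ∑ i ∈ Finset.range n, ((n+1).choose (i+1):ℝ) * A (i+1) * B (n-i)
          = (∑ i ∈ Finset.range n, (n.choose i:ℝ) * A (i+1) * B (n-i))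
            + ∑ i ∈ Finset.range n, (n.choose (i+1):ℝ) * A (i+1) * B (n-i) := by
        rw [← Finset.sum_add_distrib]
        refine Finset.sum_congr rfl (fun i hi => ?_)
        rw [Nat.choose_succ_succ n i]
        push_cast
        ring
      rw [this]
      ring
    exact key (fun i => iteratedDeriv i f x) (fun i => iteratedDeriv i g x)

lemma itD_eq_within' (n : ℕ) (f : ℝ → ℝ) {a x : ℝ} (hx : x ∈ Ioi a) :
    iteratedDeriv n f x = iteratedDerivWithin n f (Ioi a) x := by
  rw [iteratedDeriv_eq_iteratedFDeriv, iteratedDerivWithin_eq_iteratedFDerivWithin,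
    iteratedFDerivWithin_of_isOpen n isOpen_Ioi hx]

lemma itD_const (k : ℕ) (c : ℝ) : iteratedDeriv (k+1) (fun _ : ℝ => c) = fun _ => 0 := by
  induction k generalizing c with
  | zero => funext x; rw [iteratedDeriv_one]; exact deriv_const x c
  | succ k ih =>
    rw [iteratedDeriv_succ', deriv_const']
    exact ih 0

/-- eventual smoothness at infinity -/
def Sm (f : ℝ → ℝ) : Prop := ∀ᶠ s in atTop, ContDiffAt ℝ (⊤:ℕ∞) f s

/-- eventual derivative bounds: all derivatives bounded by `C · M(s)/sᵏ` -/
def EvD (f M : ℝ → ℝ) : Prop :=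
  ∀ k : ℕ, ∃ C : ℝ, 0 < C ∧ ∀ᶠ s in atTop, ∀ j ≤ k, |iteratedDeriv j f s| ≤ C * M s / s ^ j

lemma Sm.contDiffOn {f : ℝ → ℝ} (hf : Sm f) :
    ∃ a : ℝ, 1 ≤ a ∧ ContDiffOn ℝ (⊤:ℕ∞) f (Ioi a) := by
  obtain ⟨a0, ha0⟩ := eventually_atTop.mp hf
  refine ⟨max a0 1, le_max_right _ _, fun x hx => ?_⟩
  exact (ha0 x (le_of_lt (lt_of_le_of_lt (le_max_left a0 1) hx))).contDiffWithinAt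

lemma evd_of {f M : ℝ → ℝ}
    (h : ∀ k : ℕ, ∃ C : ℝ, 0 < C ∧ ∀ᶠ s in atTop, |iteratedDeriv k f s| ≤ C * M s / s ^ k)
    (hM : ∀ᶠ s in atTop, 0 ≤ M s) : EvD f M := by
  intro k
  induction k with
  | zero =>
    obtain ⟨C, hC, hev⟩ := h 0
    refine ⟨C, hC, ?_⟩
    filter_upwards [hev] with s hs j hj
    interval_cases j
    exact hs
  | succ k ih =>
    obtain ⟨C, hC, hev⟩ := ih
    obtain ⟨C', hC', hev'⟩ := h (k+1)
    refine ⟨max C C', lt_of_lt_of_le hC (le_max_left _ _), ?_⟩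
    filter_upwards [hev, hev', hM, eventually_ge_atTop (1:ℝ)] with s hs hs' hMs hs1 j hj
    have hsp : (0:ℝ) < s ^ j := pow_pos (lt_of_lt_of_le one_pos hs1) j
    have hnn : 0 ≤ M s / s ^ j := div_nonneg hMs hsp.le
    rcases Nat.lt_succ_iff_lt_or_eq.mp (Nat.lt_succ_of_le hj) with hlt | rfl
    · refine le_trans (hs j (Nat.lt_succ_iff.mp hlt)) ?_
      rw [mul_div_assoc, mul_div_assoc]
      exact mul_le_mul_of_nonneg_right (le_max_left _ _) hnn
    · refine le_trans hs' ?_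
      rw [mul_div_assoc, mul_div_assoc]
      exact mul_le_mul_of_nonneg_right (le_max_right _ _) hnn

lemma EvD.nonneg_ev {f M : ℝ → ℝ} (h : EvD f M) : ∀ᶠ s in atTop, 0 ≤ M s := by
  obtain ⟨C, hC, hev⟩ := h 0
  filter_upwards [hev] with s hs
  have := (abs_nonneg _).trans (hs 0 le_rfl)
  simpa using nonneg_of_mul_nonneg_right (by simpa using this) hC

lemma EvD.weaken {f M N : ℝ → ℝ} (h : EvD f M)
    (hMN : ∀ᶠ s in atTop, M s ≤ N s) : EvD f N := by
  intro k
  obtain ⟨C, hC, hev⟩ := h k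
  refine ⟨C, hC, ?_⟩
  filter_upwards [hev, hMN, eventually_ge_atTop (1:ℝ)] with s hs hmn hs1 j hj
  refine (hs j hj).trans ?_
  have hsp : (0:ℝ) < s ^ j := pow_pos (lt_of_lt_of_le one_pos hs1) j
  gcongr


lemma EvD.mul {f g M N : ℝ → ℝ} (hf : Sm f) (hg : Sm g) (hF : EvD f M) (hG : EvD g N) :
    EvD (fun s => f s * g s) (fun s => M s * N s) := by
  obtain ⟨a, ha1, hfa⟩ := hf.contDiffOn
  obtain ⟨b, hb1, hgb⟩ := hg.contDiffOn
  intro k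
  obtain ⟨C, hC, hev⟩ := hF k
  obtain ⟨D, hD, hev'⟩ := hG k
  refine ⟨2 ^ k * (C * D), by positivity, ?_⟩
  filter_upwards [hev, hev', hF.nonneg_ev, hG.nonneg_ev,
    eventually_gt_atTop (max a b), eventually_ge_atTop (1:ℝ)] with s hs hs' hM hN hab hs1 j hj
  have hsa : s ∈ Ioi a := lt_of_le_of_lt (le_max_left a b) hab
  have hsb : s ∈ Ioi b := lt_of_le_of_lt (le_max_right a b) hab
  have hcf : ContDiffOn ℝ (⊤:ℕ∞) f (Ioi (max a b)) := hfa.mono (Ioi_subset_Ioi (le_max_left a b))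
  have hcg : ContDiffOn ℝ (⊤:ℕ∞) g (Ioi (max a b)) := hgb.mono (Ioi_subset_Ioi (le_max_right a b))
  have hspos : (0:ℝ) < s := lt_of_lt_of_le one_pos hs1
  calc |iteratedDeriv j (fun y => f y * g y) s|
      ≤ ∑ i ∈ Finset.range (j + 1), (j.choose i : ℝ) *
          |iteratedDeriv i f s| * |iteratedDeriv (j - i) g s| := itD_mul_le hcf hcg hab j
    _ ≤ ∑ i ∈ Finset.range (j + 1), (j.choose i : ℝ) *
          (C * D * (M s * N s) / s ^ j) := by
        refine Finset.sum_le_sum (fun i hi => ?_)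
        have hij : i ≤ j := Nat.lt_succ_iff.mp (Finset.mem_range.mp hi)
        have h1 := hs i (hij.trans hj)
        have h2 := hs' (j - i) ((Nat.sub_le j i).trans hj)
        have hprod : |iteratedDeriv i f s| * |iteratedDeriv (j-i) g s|
            ≤ (C * M s / s ^ i) * (D * N s / s ^ (j-i)) :=
          mul_le_mul h1 h2 (abs_nonneg _) ((abs_nonneg _).trans h1)
        have heq : (C * M s / s ^ i) * (D * N s / s ^ (j-i))
            = C * D * (M s * N s) / s ^ j := by
          have hpow : (s:ℝ) ^ i * s ^ (j-i) = s ^ j := by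
            rw [← pow_add]; congr 1; omega
          field_simp
          rw [← hpow]; ring
        rw [mul_assoc, mul_assoc]
        refine mul_le_mul_of_nonneg_left ?_ (Nat.cast_nonneg _)
        rw [← mul_assoc]
        exact hprod.trans (le_of_eq heq)
    _ = (2:ℝ) ^ j * (C * D) * (M s * N s) / s ^ j := by
        rw [← Finset.sum_mul]
        have hh : ∑ i ∈ Finset.range (j+1), (j.choose i : ℝ) = 2 ^ j := by
          exact_mod_cast Nat.sum_range_choose j
        rw [hh]; ring
    _ ≤ 2 ^ k * (C * D) * (M s * N s) / s ^ j := by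
        have h2 : (2:ℝ) ^ j ≤ 2 ^ k := pow_le_pow_right₀ one_le_two hj
        have h3 : (0:ℝ) ≤ (C*D) * (M s * N s) / s^j := by positivity
        calc (2:ℝ)^j * (C*D) * (M s*N s)/s^j = 2^j * ((C*D)*(M s*N s)/s^j) := by ring
          _ ≤ 2^k * ((C*D)*(M s*N s)/s^j) := mul_le_mul_of_nonneg_right h2 h3
          _ = 2^k * (C*D) * (M s*N s)/s^j := by ring

lemma evd_of_deriv {f g M : ℝ → ℝ} (hfg : ∀ᶠ s in atTop, deriv f s = g s)
    (h0 : ∃ C : ℝ, 0 < C ∧ ∀ᶠ s in atTop, |f s| ≤ C * M s)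
    (hg : EvD g (fun s => M s / s)) : EvD f M := by
  obtain ⟨a, ha⟩ := eventually_atTop.mp hfg
  intro k
  obtain ⟨C0, hC0, hev0⟩ := h0
  obtain ⟨C, hC, hev⟩ := hg k
  refine ⟨max C0 C, lt_of_lt_of_le hC0 (le_max_left _ _), ?_⟩
  have hMnn : ∀ᶠ s in atTop, 0 ≤ M s := by
    filter_upwards [hev0] with s hs
    nlinarith [abs_nonneg (f s)]
  filter_upwards [hev0, hev, hMnn, eventually_ge_atTop (1:ℝ),
    eventually_gt_atTop a] with s hs0 hs hM hs1 hsa j hj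
  have hspos : (0:ℝ) < s := lt_of_lt_of_le one_pos hs1
  match j with
  | 0 =>
    simp only [iteratedDeriv_zero, pow_zero, div_one]
    exact hs0.trans (mul_le_mul_of_nonneg_right (le_max_left _ _) hM)
  | (i+1) =>
    have hne : deriv f =ᶠ[nhds s] g := by
      filter_upwards [isOpen_Ioi.mem_nhds (show s ∈ Ioi a from hsa)] with y hy
      exact ha y (le_of_lt hy)
    have : iteratedDeriv (i+1) f s = iteratedDeriv i g s := by
      rw [iteratedDeriv_succ', hne.iteratedDeriv_eq i]
    rw [this]
    refine (hs i (by omega)).trans ?_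
    have heq : C * (M s / s) / s ^ i = C * M s / s ^ (i+1) := by
      rw [pow_succ]
      ring
    rw [heq]
    have hnn : 0 ≤ M s / s ^ (i+1) := div_nonneg hM (by positivity)
    rw [mul_div_assoc, mul_div_assoc]
    exact mul_le_mul_of_nonneg_right (le_max_right _ _) hnn

/-- if `deriv f = c·f·r` with `r = O(1/s)` (with all derivatives), and `f ≥ 1`
eventually, then `f` is self-majorized. -/
lemma evd_self_of_deriv {f r : ℝ → ℝ} {c : ℝ} (hf : Sm f) (hr : Sm r)
    (hfr : ∀ᶠ s in atTop, deriv f s = c * (f s * r s))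
    (hf1 : ∀ᶠ s in atTop, 1 ≤ f s)
    (hrb : EvD r (fun s => s⁻¹)) : EvD f f := by
  -- by induction on k, uniform claim
  intro k
  induction k with
  | zero =>
    refine ⟨1, one_pos, ?_⟩
    filter_upwards [hf1] with s hs1 j hj
    interval_cases j
    simp only [iteratedDeriv_zero, pow_zero, div_one, one_mul]
    exact le_of_eq (abs_of_pos (lt_of_lt_of_le one_pos hs1))
  | succ k ih =>
    obtain ⟨C, hC, hev⟩ := ih
    obtain ⟨D, hD, hevr⟩ := hrb k
    obtain ⟨a, ha1, hfa⟩ := hf.contDiffOn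
    obtain ⟨b, hb1, hra⟩ := hr.contDiffOn
    obtain ⟨e, he⟩ := eventually_atTop.mp hfr
    set ab := max (max a b) e with hab
    refine ⟨max C ((|c|+1) * (2^k * (C * D))), lt_of_lt_of_le hC (le_max_left _ _), ?_⟩
    filter_upwards [hev, hevr, hf1, eventually_ge_atTop (1:ℝ),
      eventually_gt_atTop ab] with s hs hsr hs1 hs1' hsab j hj
    have hspos : (0:ℝ) < s := lt_of_lt_of_le one_pos hs1'
    have hfpos : (0:ℝ) < f s := lt_of_lt_of_le one_pos hs1
    have hfnn : (0:ℝ) ≤ f s := hfpos.le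
    have hnnj : 0 ≤ f s / s ^ j := by positivity
    rcases Nat.lt_succ_iff_lt_or_eq.mp (Nat.lt_succ_of_le hj) with hlt | rfl
    · refine (hs j (Nat.lt_succ_iff.mp hlt)).trans ?_
      rw [mul_div_assoc, mul_div_assoc]
      exact mul_le_mul_of_nonneg_right (le_max_left _ _) hnnj
    · -- j = k+1 : use deriv f = c (f r) and Leibniz
      have hsa : s ∈ Ioi (max a b) := lt_of_le_of_lt (le_max_left _ _) hsab
      have hne : deriv f =ᶠ[nhds s] (fun y => c * (f y * r y)) := by
        filter_upwards [isOpen_Ioi.mem_nhds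
          (show s ∈ Ioi e from lt_of_le_of_lt (le_max_right _ _) hsab)] with y hy
        exact he y (le_of_lt hy)
      have e1 : iteratedDeriv (k+1) f s = iteratedDeriv k (fun y => c * (f y * r y)) s := by
        rw [iteratedDeriv_succ', hne.iteratedDeriv_eq k]
      have hcf : ContDiffOn ℝ (⊤:ℕ∞) f (Ioi (max a b)) :=
        hfa.mono (Ioi_subset_Ioi (le_max_left a b))
      have hcr : ContDiffOn ℝ (⊤:ℕ∞) r (Ioi (max a b)) :=
        hra.mono (Ioi_subset_Ioi (le_max_right a b))
      have e2 : iteratedDeriv k (fun y => c * (f y * r y)) s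
          = c * iteratedDeriv k (fun y => f y * r y) s := by
        rw [itD_eq_within' k _ hsa, itD_eq_within' k _ hsa]
        have hC2 : ContDiffOn ℝ k (fun y => f y * r y) (Ioi (max a b)) :=
          (hcf.mul hcr).of_le (by exact_mod_cast le_top)
        exact iteratedDerivWithin_const_mul hsa (uniqueDiffOn_Ioi _) c (hC2.contDiffWithinAt hsa)
      rw [e1, e2, abs_mul]
      have e3 : |iteratedDeriv k (fun y => f y * r y) s|
          ≤ 2^k * (C * D) * (f s / s ^ (k+1)) := by
        refine (itD_mul_le hcf hcr hsa k).trans ?_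
        have hterm : ∀ i ∈ Finset.range (k+1), (k.choose i : ℝ) *
            |iteratedDeriv i f s| * |iteratedDeriv (k - i) r s|
            ≤ (k.choose i : ℝ) * (C * D * (f s / s ^ (k+1))) := by
          intro i hi
          have hik : i ≤ k := Nat.lt_succ_iff.mp (Finset.mem_range.mp hi)
          have h1 := hs i hik
          have h2 := hsr (k - i) (Nat.sub_le k i)
          have hprod : |iteratedDeriv i f s| * |iteratedDeriv (k-i) r s|
              ≤ (C * f s / s ^ i) * (D * s⁻¹ / s ^ (k-i)) :=
            mul_le_mul h1 h2 (abs_nonneg _) ((abs_nonneg _).trans h1)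
          have heq : (C * f s / s ^ i) * (D * s⁻¹ / s ^ (k-i))
              = C * D * (f s / s ^ (k+1)) := by
            have hpow : (s:ℝ) ^ i * s ^ (k-i) = s ^ k := by
              rw [← pow_add]; congr 1; omega
            rw [pow_succ]
            field_simp
            rw [← hpow]
          rw [mul_assoc, mul_assoc]
          refine mul_le_mul_of_nonneg_left (hprod.trans (le_of_eq ?_)) (Nat.cast_nonneg _)
          rw [heq]; ring
        refine (Finset.sum_le_sum hterm).trans (le_of_eq ?_)
        rw [← Finset.sum_mul]
        have hh : ∑ i ∈ Finset.range (k+1), (k.choose i : ℝ) = 2 ^ k := by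
          exact_mod_cast Nat.sum_range_choose k
        rw [hh]; ring
      calc |c| * |iteratedDeriv k (fun y => f y * r y) s|
          ≤ (|c|+1) * (2^k * (C * D) * (f s / s ^ (k+1))) := by
            refine mul_le_mul (by linarith [abs_nonneg c]) e3 (abs_nonneg _) ?_
            linarith [abs_nonneg c]
        _ = ((|c|+1) * (2^k * (C * D))) * f s / s ^ (k+1) := by ring
        _ ≤ max C ((|c|+1) * (2^k * (C * D))) * f s / s ^ (k+1) := by
            gcongr
            exact le_max_right _ _


lemma Sm.inv {f : ℝ → ℝ} (hf : Sm f) (hf1 : ∀ᶠ s in atTop, 1 ≤ f s) :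
    Sm (fun s => (f s)⁻¹) := by
  filter_upwards [hf, hf1] with s h1 h2
  exact h1.inv (by linarith)

lemma evd_inv {f : ℝ → ℝ} (hf : Sm f) (hf1 : ∀ᶠ s in atTop, 1 ≤ f s) (h : EvD f f) :
    EvD (fun s => (f s)⁻¹) (fun s => (f s)⁻¹) := by
  obtain ⟨a0, ha0, hfa0⟩ := hf.contDiffOn
  obtain ⟨a1, ha1⟩ := eventually_atTop.mp hf1
  set a := max a0 a1 with haa
  have hca : ContDiffOn ℝ (⊤:ℕ∞) f (Ioi a) := hfa0.mono (Ioi_subset_Ioi (le_max_left _ _))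
  have hinv : ContDiffOn ℝ (⊤:ℕ∞) (fun s => (f s)⁻¹) (Ioi a) := by
    intro x hx
    have h1x : 1 ≤ f x := ha1 x (le_of_lt (lt_of_le_of_lt (le_max_right a0 a1) hx))
    exact ((hca.contDiffAt (isOpen_Ioi.mem_nhds hx)).inv (by linarith)).contDiffWithinAt
  intro k
  induction k with
  | zero =>
    refine ⟨1, one_pos, ?_⟩
    filter_upwards [hf1] with s hs1 j hj
    interval_cases j
    simp only [iteratedDeriv_zero, pow_zero, div_one, one_mul]
    exact le_of_eq (abs_of_nonneg (by positivity))
  | succ k ih =>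
    obtain ⟨C, hC, hev⟩ := ih
    obtain ⟨D, hD, hevf⟩ := h (k+1)
    refine ⟨max C (2^(k+1) * (D * C)), lt_of_lt_of_le hC (le_max_left _ _), ?_⟩
    filter_upwards [hev, hevf, hf1, eventually_ge_atTop (1:ℝ),
      eventually_gt_atTop a] with s hs hsf hs1 hs1' hsa j hj
    have hspos : (0:ℝ) < s := lt_of_lt_of_le one_pos hs1'
    have hfpos : (0:ℝ) < f s := lt_of_lt_of_le one_pos hs1
    have hnnj : (0:ℝ) ≤ (f s)⁻¹ / s ^ j := by positivity
    rcases Nat.lt_succ_iff_lt_or_eq.mp (Nat.lt_succ_of_le hj) with hlt | rfl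
    · refine (hs j (Nat.lt_succ_iff.mp hlt)).trans ?_
      rw [mul_div_assoc, mul_div_assoc]
      exact mul_le_mul_of_nonneg_right (le_max_left _ _) hnnj
    · -- the Leibniz identity on f · f⁻¹ = 1
      have hone : (fun y => f y * (f y)⁻¹) =ᶠ[nhds s] (fun _ => (1:ℝ)) := by
        filter_upwards [isOpen_Ioi.mem_nhds (show s ∈ Ioi a from hsa)] with y hy
        have : 1 ≤ f y := ha1 y (le_of_lt (lt_of_le_of_lt (le_max_right a0 a1) hy))
        exact mul_inv_cancel₀ (by linarith)
      have hzero : iteratedDeriv (k+1) (fun y => f y * (f y)⁻¹) s = 0 := by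
        rw [hone.iteratedDeriv_eq (k+1), itD_const k 1]
      rw [itD_mul (k+1) hca hinv hsa] at hzero
      rw [Finset.sum_range_succ'] at hzero
      simp only [Nat.choose_zero_right, Nat.cast_one, one_mul, iteratedDeriv_zero,
        Nat.sub_zero] at hzero
      -- hzero : ∑ i ∈ range (k+1), ((k+1).choose (i+1)) * itD (i+1) f * itD (k+1-(i+1)) f⁻¹
      --          + f s * itD (k+1) f⁻¹ s = 0
      have hsolve : f s * iteratedDeriv (k+1) (fun y => (f y)⁻¹) s
          = -∑ i ∈ Finset.range (k+1), ((k+1).choose (i+1) : ℝ) *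
              iteratedDeriv (i+1) f s * iteratedDeriv (k+1-(i+1)) (fun y => (f y)⁻¹) s := by
        linarith [hzero]
      have habs : f s * |iteratedDeriv (k+1) (fun y => (f y)⁻¹) s|
          ≤ ∑ i ∈ Finset.range (k+1), ((k+1).choose (i+1) : ℝ) *
              (D * C * (f s)⁻¹ / s ^ (k+1)) * f s := by
        conv_lhs => rw [← abs_of_pos hfpos, ← abs_mul]
        rw [hsolve, abs_neg]
        refine (Finset.abs_sum_le_sum_abs _ _).trans (Finset.sum_le_sum (fun i hi => ?_))
        have hik : i ≤ k := Nat.lt_succ_iff.mp (Finset.mem_range.mp hi)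
        have h1 := hsf (i+1) (by omega)
        have h2 := hs (k+1-(i+1)) (by omega)
        rw [abs_mul, abs_mul, Nat.abs_cast]
        have hprod : |iteratedDeriv (i+1) f s| * |iteratedDeriv (k+1-(i+1)) (fun y => (f y)⁻¹) s|
            ≤ (D * f s / s ^ (i+1)) * (C * (f s)⁻¹ / s ^ (k+1-(i+1))) :=
          mul_le_mul h1 h2 (abs_nonneg _) ((abs_nonneg _).trans h1)
        have heq : (D * f s / s ^ (i+1)) * (C * (f s)⁻¹ / s ^ (k+1-(i+1)))
            = D * C * (f s)⁻¹ / s ^ (k+1) * f s := by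
          have hpow : (s:ℝ) ^ (i+1) * s ^ (k+1-(i+1)) = s ^ (k+1) := by
            rw [← pow_add]; congr 1; omega
          field_simp
          rw [← hpow]
        calc (((k+1).choose (i+1) : ℝ)) * |iteratedDeriv (i+1) f s| *
              |iteratedDeriv (k+1-(i+1)) (fun y => (f y)⁻¹) s|
            = (((k+1).choose (i+1) : ℝ)) * (|iteratedDeriv (i+1) f s| *
              |iteratedDeriv (k+1-(i+1)) (fun y => (f y)⁻¹) s|) := by ring
          _ ≤ (((k+1).choose (i+1) : ℝ)) * ((D * f s / s ^ (i+1)) *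
              (C * (f s)⁻¹ / s ^ (k+1-(i+1)))) :=
              mul_le_mul_of_nonneg_left hprod (Nat.cast_nonneg _)
          _ = (((k+1).choose (i+1) : ℝ)) * (D * C * (f s)⁻¹ / s ^ (k+1)) * f s := by
              rw [heq]; ring
      have hsum : ∑ i ∈ Finset.range (k+1), ((k+1).choose (i+1) : ℝ) *
            (D * C * (f s)⁻¹ / s ^ (k+1)) * f s
          ≤ 2^(k+1) * (D * C) * (f s)⁻¹ / s ^ (k+1) * f s := by
        rw [← Finset.sum_mul, ← Finset.sum_mul]
        have hch : ∑ i ∈ Finset.range (k+1), (((k+1).choose (i+1)) : ℝ) ≤ 2^(k+1) := by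
          have := Nat.sum_range_choose (k+1)
          have hsplit : ∑ i ∈ Finset.range (k+2), ((k+1).choose i) = 2^(k+1) := this
          rw [Finset.sum_range_succ'] at hsplit
          have : ∑ i ∈ Finset.range (k+1), ((k+1).choose (i+1)) ≤ 2^(k+1) := by omega
          exact_mod_cast this
        have hnn2 : (0:ℝ) ≤ (D * C * (f s)⁻¹ / s ^ (k+1)) * f s := by positivity
        calc (∑ i ∈ Finset.range (k+1), (((k+1).choose (i+1)) : ℝ)) *
              (D * C * (f s)⁻¹ / s ^ (k+1)) * f s
            = (∑ i ∈ Finset.range (k+1), (((k+1).choose (i+1)) : ℝ)) *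
              ((D * C * (f s)⁻¹ / s ^ (k+1)) * f s) := by ring
          _ ≤ 2^(k+1) * ((D * C * (f s)⁻¹ / s ^ (k+1)) * f s) :=
              mul_le_mul_of_nonneg_right hch hnn2
          _ = 2^(k+1) * (D * C) * (f s)⁻¹ / s ^ (k+1) * f s := by ring
      have hfinal := habs.trans hsum
      have : |iteratedDeriv (k+1) (fun y => (f y)⁻¹) s|
          ≤ 2^(k+1) * (D * C) * (f s)⁻¹ / s ^ (k+1) := by
        have := mul_le_mul_of_nonneg_left hfinal (le_of_lt (inv_pos.mpr hfpos))
        calc |iteratedDeriv (k+1) (fun y => (f y)⁻¹) s|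
            = (f s)⁻¹ * (f s * |iteratedDeriv (k+1) (fun y => (f y)⁻¹) s|) := by
              field_simp
          _ ≤ (f s)⁻¹ * (2^(k+1) * (D * C) * (f s)⁻¹ / s ^ (k+1) * f s) :=
              mul_le_mul_of_nonneg_left hfinal (le_of_lt (inv_pos.mpr hfpos))
          _ = 2^(k+1) * (D * C) * (f s)⁻¹ / s ^ (k+1) := by
              field_simp
      refine this.trans ?_
      rw [mul_div_assoc, mul_div_assoc]
      exact mul_le_mul_of_nonneg_right (le_max_right _ _) (by positivity)

lemma EvD.congr {f g M : ℝ → ℝ} (h : EvD f M) (hfg : ∀ᶠ s in atTop, f s = g s) : EvD g M := by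
  obtain ⟨a, ha⟩ := eventually_atTop.mp hfg
  intro k
  obtain ⟨C, hC, hev⟩ := h k
  refine ⟨C, hC, ?_⟩
  filter_upwards [hev, eventually_gt_atTop a] with s hs hsa j hj
  have he : g =ᶠ[nhds s] f := by
    filter_upwards [isOpen_Ioi.mem_nhds (show s ∈ Ioi a from hsa)] with y hy
    exact (ha y (le_of_lt hy)).symm
  rw [he.iteratedDeriv_eq j]
  exact hs j hj

lemma Sm.congr {f g : ℝ → ℝ} (h : Sm f) (hfg : ∀ᶠ s in atTop, f s = g s) : Sm g := by
  obtain ⟨a, ha⟩ := eventually_atTop.mp hfg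
  filter_upwards [h, eventually_gt_atTop a] with s hs hsa
  have he : g =ᶠ[nhds s] f := by
    filter_upwards [isOpen_Ioi.mem_nhds (show s ∈ Ioi a from hsa)] with y hy
    exact (ha y (le_of_lt hy)).symm
  exact hs.congr_of_eventuallyEq he

lemma Sm.mul {f g : ℝ → ℝ} (hf : Sm f) (hg : Sm g) : Sm (fun s => f s * g s) := by
  filter_upwards [hf, hg] with s h1 h2; exact h1.mul h2

lemma evd_one {N : ℝ → ℝ} (hN : ∀ᶠ s in atTop, 1 ≤ N s) : EvD (fun _ => (1:ℝ)) N := by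
  refine evd_of (fun k => ⟨1, one_pos, ?_⟩) (hN.mono (fun s hs => by linarith))
  filter_upwards [hN, eventually_ge_atTop (1:ℝ)] with s hs hs1
  match k with
  | 0 => simpa using hs
  | (i+1) =>
    rw [itD_const i 1]
    have : (0:ℝ) ≤ 1 * N s / s ^ (i+1) := by positivity
    simpa using this

lemma ev_lt (j : ℕ) : ∀ᶠ s in atTop, ∀ i < j, 1 ≤ iterLog i s := by
  induction j with
  | zero => filter_upwards with s i hi; exact absurd hi (Nat.not_lt_zero i)
  | succ j ih =>
    filter_upwards [ih, ev_ge j 1] with s h1 h2 i hi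
    rcases Nat.lt_succ_iff_lt_or_eq.mp hi with h | rfl
    · exact h1 i h
    · exact h2

lemma Sm_iterLog (j : ℕ) : Sm (iterLog j) := by
  filter_upwards [ev_lt j] with s hs
  exact iterLog_contDiffAt j s (fun i hi => lt_of_lt_of_le one_pos (hs i hi))

lemma ev_deriv_iterLog (j : ℕ) : ∀ᶠ s in atTop, deriv (iterLog j) s = dL j s := by
  filter_upwards [ev_lt j] with s hs
  exact (iterLog_hasDerivAt j s (fun i hi => lt_of_lt_of_le one_pos (hs i hi))).deriv

lemma ev_dL_pos (j : ℕ) : ∀ᶠ s in atTop, 0 < dL j s := by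
  filter_upwards [ev_lt j] with s hs
  have : (0:ℝ) < ∏ i ∈ Finset.range j, iterLog i s :=
    Finset.prod_pos (fun i hi => lt_of_lt_of_le one_pos (hs i (Finset.mem_range.mp hi)))
  exact inv_pos.mpr this

lemma ev_dL_le (j : ℕ) : ∀ᶠ s in atTop, dL (j+1) s ≤ s⁻¹ := by
  filter_upwards [ev_lt (j+1), eventually_ge_atTop (1:ℝ)] with s hs hs1
  have hspos : (0:ℝ) < s := lt_of_lt_of_le one_pos hs1
  have hP : (1:ℝ) ≤ ∏ i ∈ Finset.range j, iterLog (i+1) s := by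
    calc (1:ℝ) = ∏ _i ∈ Finset.range j, (1:ℝ) := (Finset.prod_const_one).symm
      _ ≤ ∏ i ∈ Finset.range j, iterLog (i+1) s := by
          refine Finset.prod_le_prod (fun i _ => zero_le_one) (fun i hi => ?_)
          have hij : i < j := Finset.mem_range.mp hi
          exact hs (i+1) (by omega)
  have hprod : s ≤ ∏ i ∈ Finset.range (j+1), iterLog i s := by
    rw [Finset.prod_range_succ']
    show s ≤ (∏ i ∈ Finset.range j, iterLog (i+1) s) * iterLog 0 s
    have : iterLog 0 s = s := rfl
    rw [this]
    nlinarith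
  rw [dL]
  exact inv_anti₀ hspos hprod

/-- the master induction -/
lemma master (j : ℕ) :
    (∀ᶠ s in atTop, 1 ≤ iterLog j s) ∧ EvD (iterLog j) (iterLog j) ∧
      Sm (dL (j+1)) ∧ EvD (dL (j+1)) (dL (j+1)) := by
  induction j with
  | zero =>
    have h1 : ∀ᶠ s in atTop, 1 ≤ iterLog 0 s := eventually_ge_atTop 1
    have hid : EvD (iterLog 0) (iterLog 0) := by
      refine evd_of_deriv (f := iterLog 0) (g := fun _ => (1:ℝ)) ?_ ⟨1, one_pos, ?_⟩ ?_
      · filter_upwards with s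
        show deriv (fun s => s) s = 1
        exact deriv_id s
      · filter_upwards [eventually_ge_atTop (1:ℝ)] with s hs
        show |s| ≤ 1 * s
        rw [abs_of_nonneg (by linarith), one_mul]
      · refine evd_one ?_
        filter_upwards [eventually_ge_atTop (1:ℝ)] with s hs
        show (1:ℝ) ≤ s / s
        rw [div_self (by linarith)]
    have hdL1 : ∀ᶠ s in atTop, (s)⁻¹ = dL 1 s := by
      filter_upwards with s
      rw [dL, Finset.prod_range_one]
      simp [iterLog]
    have hinv : EvD (dL 1) (dL 1) := by
      refine (((evd_inv (f := iterLog 0) ?_ h1 hid).congr hdL1).weaken ?_)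
      · filter_upwards with s; exact contDiffAt_id
      · filter_upwards [hdL1] with s hs
        rw [← hs]
        simp [iterLog]
    have hsm : Sm (dL 1) := by
      refine Sm.congr (f := fun s => (iterLog 0 s)⁻¹) ?_ hdL1
      exact Sm.inv (by filter_upwards with s; exact contDiffAt_id) h1
    exact ⟨h1, hid, hsm, hinv⟩
  | succ j ih =>
    obtain ⟨h1, hA, hsmd, hB⟩ := ih
    have h1' : ∀ᶠ s in atTop, 1 ≤ iterLog (j+1) s := ev_ge (j+1) 1
    have hA' : EvD (iterLog (j+1)) (iterLog (j+1)) := by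
      refine evd_of_deriv (g := dL (j+1)) (ev_deriv_iterLog (j+1)) ⟨1, one_pos, ?_⟩ ?_
      · filter_upwards [h1'] with s hs
        rw [abs_of_nonneg (by linarith), one_mul]
      · refine hB.weaken ?_
        filter_upwards [ev_dL_le j, h1', eventually_ge_atTop (1:ℝ)] with s hle hs1 hspos
        refine hle.trans ?_
        rw [inv_eq_one_div]
        have h0s : (0:ℝ) < s := lt_of_lt_of_le one_pos hspos
        gcongr
    have heq : ∀ᶠ s in atTop, dL (j+1) s * (iterLog (j+1) s)⁻¹ = dL (j+2) s := by
      filter_upwards with s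
      rw [dL, dL, Finset.prod_range_succ (fun i => iterLog i s) (j+1), mul_inv]
    have hsmL : Sm (iterLog (j+1)) := Sm_iterLog (j+1)
    have hsminv : Sm (fun s => (iterLog (j+1) s)⁻¹) := hsmL.inv h1'
    have hsmd' : Sm (dL (j+2)) := (hsmd.mul hsminv).congr heq
    have hB' : EvD (dL (j+2)) (dL (j+2)) := by
      exact ((hB.mul hsmd hsminv (evd_inv hsmL h1' hA')).congr heq).weaken
        (heq.mono fun _ hs => le_of_eq hs)
    exact ⟨h1', hA', hsmd', hB'⟩

theorem stmt12 (m : ℕ) (hm : 2 ≤ m) (ε : ℝ) (hε : 0 < ε) :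
    ∀ k : ℕ, 1 ≤ k → ∃ C > 0, ∃ s₀ : ℝ, 1 ≤ s₀ ∧ ∀ s : ℝ, s₀ ≤ s →
      |iteratedDeriv k (fun s' => Real.log s' * (iterLog m s') ^ (1 + ε)) s|
        ≤ C * (Real.log s * (iterLog m s) ^ (1 + ε)) / s ^ k := by
  obtain ⟨h1m, hAm, hsmdm, hBm⟩ := master m
  set p : ℝ → ℝ := fun s => (iterLog m s) ^ (1 + ε) with hp_def
  have h1p : ∀ᶠ s in atTop, 1 ≤ p s := by
    filter_upwards [h1m] with s hs
    exact Real.one_le_rpow hs (by linarith)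
  have hsmp : Sm p := by
    filter_upwards [Sm_iterLog m, h1m] with s h1 h2
    exact (Real.contDiffAt_rpow_const_of_ne (by linarith)).comp s h1
  have hder : ∀ᶠ s in atTop, deriv p s = (1+ε) * (p s * dL (m+1) s) := by
    filter_upwards [ev_lt (m+1)] with s hs
    have hpos : ∀ i < m, 0 < iterLog i s :=
      fun i hi => lt_of_lt_of_le one_pos (hs i (by omega))
    have hL0 : (0:ℝ) < iterLog m s :=
      lt_of_lt_of_le one_pos (hs m (by omega))
    have hL := iterLog_hasDerivAt m s hpos
    have hr := Real.hasDerivAt_rpow_const (x := iterLog m s) (p := 1+ε) (Or.inl hL0.ne')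
    have hcomp : HasDerivAt p ((1 + ε) * iterLog m s ^ (1 + ε - 1) * dL m s) s := hr.comp s hL
    rw [hcomp.deriv]
    have h2 : dL (m+1) s = dL m s * (iterLog m s)⁻¹ := by
      rw [dL, dL, Finset.prod_range_succ, mul_inv]
    rw [h2, hp_def, show (1:ℝ)+ε-1 = ε by ring]
    have h3 : iterLog m s ^ (1+ε) = iterLog m s * iterLog m s ^ ε := by
      rw [Real.rpow_add hL0, Real.rpow_one]
    show _ = (1+ε) * (iterLog m s ^ (1+ε) * (dL m s * (iterLog m s)⁻¹))
    rw [h3]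
    field_simp
  have hrb : EvD (dL (m+1)) (fun s => s⁻¹) := hBm.weaken (ev_dL_le m)
  have hsmr : Sm (dL (m+1)) := hsmdm
  have hpp : EvD p p := evd_self_of_deriv hsmp hsmr hder h1p hrb
  -- now η = log · p ; note iterLog 1 = log
  obtain ⟨h11, hA1, _, _⟩ := master 1
  have hlog_eq : ∀ᶠ s in atTop, iterLog 1 s = Real.log s := by
    filter_upwards with s; simp [iterLog]
  have hsmlog : Sm (iterLog 1) := Sm_iterLog 1
  have hEta : EvD (fun s' => Real.log s' * (iterLog m s') ^ (1 + ε))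
      (fun s => Real.log s * (iterLog m s) ^ (1 + ε)) := by
    have h := (hA1.mul hsmlog hsmp hpp).congr
      (by filter_upwards [hlog_eq] with s hs; rw [hs])
    refine h.weaken ?_
    filter_upwards [hlog_eq] with s hs
    rw [hs]
  intro k _
  obtain ⟨C, hC, hev⟩ := hEta k
  obtain ⟨a, ha⟩ := eventually_atTop.mp hev
  refine ⟨C, hC, max a 1, le_max_right _ _, fun s hs => ?_⟩
  exact ha s (le_trans (le_max_left a 1) hs) k le_rfl
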